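/- Fix ρ ∈ [0,1]^K with Σ_k ρ_k = 1, a sequence αₙ ∈ (0,1) with lim_n αₙ = 0 and lim_n n·αₙ = ∞, and a constant ξ₂ > 0. Suppose for each n, Pₙ is a probability distribution on Zⁿ with D(Pₙ‖Q_{αₙ}^{⊗n}) ≤ exp(−ξ₂·n·αₙ). Then there exists a constant ξ₃ > 0 such that for all n large enough, |D(Pₙ‖Q_∅^{⊗n}) − D(Q_{αₙ}^{⊗n}‖Q_∅^{⊗n})| ≤ exp(−ξ₃·n·αₙ). -/

import Mathlib

open Finset Filter
open scoped Topology

noncomputable section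

/-- `P` is a probability distribution on the finite type `Z`. -/
def IsDist {Z : Type*} [Fintype Z] (P : Z → ℝ) : Prop :=
  (∀ z, 0 ≤ P z) ∧ ∑ z, P z = 1

/-- Kullback–Leibler divergence `D(P‖Q)` (natural logarithm). -/
def klDiv {Z : Type*} [Fintype Z] (P Q : Z → ℝ) : ℝ :=
  ∑ z, P z * Real.log (P z / Q z)

/-- `P` is absolutely continuous w.r.t. `Q`. -/
def AbsCont {Z : Type*} (P Q : Z → ℝ) : Prop :=
  ∀ z, Q z = 0 → P z = 0

/-- The output mixture `Q_α(z) = Σ_{T⊆[K]} (∏_{k∈T} ρ_k α)(∏_{k∉T}(1-ρ_k α)) Q_T(z)`. -/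
def Qmix {K : ℕ} {Z : Type*} [Fintype Z] (Q : Finset (Fin K) → Z → ℝ) (ρ : Fin K → ℝ)
    (α : ℝ) (z : Z) : ℝ :=
  ∑ T : Finset (Fin K), (∏ k ∈ T, ρ k * α) * (∏ k ∈ Tᶜ, (1 - ρ k * α)) * Q T z

/-- Weierstrass: `1 - ∑ f ≤ ∏ (1 - f)` for `f` in `[0,1]`. -/
lemma one_sub_sum_le_prod_one_sub' {ι : Type*} (s : Finset ι) (f : ι → ℝ)
    (h0 : ∀ i ∈ s, 0 ≤ f i) (h1 : ∀ i ∈ s, f i ≤ 1) :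
    1 - ∑ i ∈ s, f i ≤ ∏ i ∈ s, (1 - f i) := by
  classical
  induction s using Finset.cons_induction with
  | empty => simp
  | cons a s ha ih =>
    rw [Finset.prod_cons, Finset.sum_cons]
    have h0a := h0 a (Finset.mem_cons_self a s)
    have h1a := h1 a (Finset.mem_cons_self a s)
    have h0' : ∀ i ∈ s, 0 ≤ f i := fun i hi => h0 i (Finset.mem_cons_of_mem hi)
    have h1' : ∀ i ∈ s, f i ≤ 1 := fun i hi => h1 i (Finset.mem_cons_of_mem hi)
    have hp := ih h0' h1'
    have hple : ∏ i ∈ s, (1 - f i) ≤ 1 :=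
      Finset.prod_le_one (fun i hi => by linarith [h1' i hi]) (fun i hi => by linarith [h0' i hi])
    nlinarith [hp, hple]

/-- Gibbs' inequality. -/
lemma klDiv_nonneg' {W : Type*} [Fintype W] (P Q : W → ℝ) (hP : IsDist P) (hQ : IsDist Q)
    (hQpos : ∀ z, 0 < Q z) : 0 ≤ klDiv P Q := by
  have key : ∀ z, P z * Real.log (Q z / P z) ≤ Q z - P z := by
    intro z
    rcases eq_or_lt_of_le (hP.1 z) with h | h
    · simp [← h, (hQpos z).le]
    · have hl := Real.log_le_sub_one_of_pos (div_pos (hQpos z) h)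
      have := mul_le_mul_of_nonneg_left hl h.le
      calc P z * Real.log (Q z / P z) ≤ P z * (Q z / P z - 1) := this
        _ = Q z - P z := by field_simp
  have hsum : ∑ z, P z * Real.log (Q z / P z) ≤ 0 := by
    calc ∑ z, P z * Real.log (Q z / P z) ≤ ∑ z, (Q z - P z) :=
          Finset.sum_le_sum fun z _ => key z
      _ = 0 := by rw [Finset.sum_sub_distrib, hP.2, hQ.2]; ring
  have heq : klDiv P Q = -∑ z, P z * Real.log (Q z / P z) := by
    rw [klDiv, ← Finset.sum_neg_distrib]
    refine Finset.sum_congr rfl fun z _ => ?_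
    rcases eq_or_lt_of_le (hP.1 z) with h | h
    · simp [← h]
    · rw [Real.log_div (ne_of_gt h) (ne_of_gt (hQpos z)),
        Real.log_div (ne_of_gt (hQpos z)) (ne_of_gt h)]
      ring
  linarith [heq ▸ neg_nonneg.2 hsum]

/-- Donsker–Varadhan inequality (finite form). -/
lemma dv_ineq {W : Type*} [Fintype W] (P Q : W → ℝ) (hP : IsDist P) (hQ : IsDist Q)
    (hQpos : ∀ z, 0 < Q z) (f : W → ℝ) :
    ∑ z, P z * f z ≤ klDiv P Q + Real.log (∑ z, Q z * Real.exp (f z)) := by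
  have hne : Nonempty W := by
    by_contra h
    rw [not_nonempty_iff] at h
    have := hP.2
    rw [Finset.univ_eq_empty, Finset.sum_empty] at this
    norm_num at this
  set C := ∑ z, Q z * Real.exp (f z) with hC
  have hCpos : 0 < C :=
    Finset.sum_pos (fun z _ => mul_pos (hQpos z) (Real.exp_pos _)) Finset.univ_nonempty
  set Q' : W → ℝ := fun z => Q z * Real.exp (f z) / C with hQ'def
  have hQ'pos : ∀ z, 0 < Q' z := fun z => div_pos (mul_pos (hQpos z) (Real.exp_pos _)) hCpos
  have hQ'dist : IsDist Q' := by
    refine ⟨fun z => (hQ'pos z).le, ?_⟩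
    rw [hQ'def, ← Finset.sum_div, ← hC, div_self (ne_of_gt hCpos)]
  have h0 := klDiv_nonneg' P Q' hP hQ'dist hQ'pos
  have expand : klDiv P Q' = klDiv P Q - ∑ z, P z * f z + Real.log C := by
    have term : ∀ z, P z * Real.log (P z / Q' z) =
        P z * Real.log (P z / Q z) - P z * f z + P z * Real.log C := by
      intro z
      rcases eq_or_lt_of_le (hP.1 z) with h | h
      · simp [← h]
      · have hQz := hQpos z
        have hQ'z := hQ'pos z
        have : Real.log (P z / Q' z) = Real.log (P z / Q z) - f z + Real.log C := by
          rw [hQ'def]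
          rw [Real.log_div (ne_of_gt h) (ne_of_gt hQ'z),
            Real.log_div (ne_of_gt h) (ne_of_gt hQz),
            Real.log_div (ne_of_gt (mul_pos hQz (Real.exp_pos _))) (ne_of_gt hCpos),
            Real.log_mul (ne_of_gt hQz) (ne_of_gt (Real.exp_pos _)), Real.log_exp]
          ring
        rw [this]; ring
    rw [klDiv, klDiv]
    rw [Finset.sum_congr rfl fun z _ => term z]
    rw [Finset.sum_add_distrib, Finset.sum_sub_distrib, ← Finset.sum_mul, hP.2, one_mul]
  linarith [expand ▸ h0]

/-- Second-order bound on the mgf of a centered bounded variable. -/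
lemma mgf_le' {W : Type*} [Fintype W] (Q : W → ℝ) (hQ : IsDist Q) (g : W → ℝ)
    (hg0 : ∑ z, Q z * g z = 0) (c : ℝ) (hc : c ≤ 1) (hgc : ∀ z, |g z| ≤ c) :
    ∑ z, Q z * Real.exp (g z) ≤ 1 + c ^ 2 := by
  have key : ∀ z, Real.exp (g z) ≤ 1 + g z + c ^ 2 := by
    intro z
    have h1 : |g z| ≤ 1 := le_trans (hgc z) hc
    have hb := Real.exp_bound h1 (by norm_num : 0 < 2)
    rw [show (Finset.range 2) = {0, 1} by rfl] at hb
    simp [Finset.sum_insert, Finset.sum_singleton] at hb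
    have h2 := (abs_le.1 hb).2
    have h3 : |g z| ^ 2 ≤ c ^ 2 := by
      have := abs_nonneg (g z)
      nlinarith [hgc z]
    have h4 : |g z| ^ 2 = g z ^ 2 := sq_abs (g z)
    have hfact : ((Nat.factorial 2 : ℝ) * 2) = 4 := by norm_num [Nat.factorial]
    nlinarith [h2, h3]
  calc ∑ z, Q z * Real.exp (g z) ≤ ∑ z, Q z * (1 + g z + c ^ 2) :=
        Finset.sum_le_sum fun z _ => mul_le_mul_of_nonneg_left (key z) (hQ.1 z)
    _ = ∑ z, Q z + ∑ z, Q z * g z + c ^ 2 * ∑ z, Q z := by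
        rw [Finset.mul_sum, ← Finset.sum_add_distrib, ← Finset.sum_add_distrib]
        exact Finset.sum_congr rfl fun z _ => by ring
    _ = 1 + c ^ 2 := by rw [hQ.2, hg0]; ring

/-- Mean deviation bound from the DV inequality. -/
lemma mean_diff_le' {W : Type*} [Fintype W] (P Q : W → ℝ) (hP : IsDist P) (hQ : IsDist Q)
    (hQpos : ∀ z, 0 < Q z) (f : W → ℝ) (M s : ℝ) (hM : 0 ≤ M) (hs : 0 < s)
    (hsM : 2 * s * M ≤ 1) (hf : ∀ z, |f z| ≤ M) :
    |∑ z, P z * f z - ∑ z, Q z * f z| ≤ klDiv P Q / s + 4 * s * M ^ 2 := by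
  set μ := ∑ z, Q z * f z with hμdef
  have hμ : |μ| ≤ M := by
    calc |μ| ≤ ∑ z, |Q z * f z| := Finset.abs_sum_le_sum_abs _ _
      _ ≤ ∑ z, Q z * M := by
          refine Finset.sum_le_sum fun z _ => ?_
          rw [abs_mul, abs_of_nonneg (hQ.1 z)]
          exact mul_le_mul_of_nonneg_left (hf z) (hQ.1 z)
      _ = M := by rw [← Finset.sum_mul, hQ.2, one_mul]
  have side : ∀ ε : ℝ, |ε| = 1 →
      ε * (∑ z, P z * f z - μ) ≤ klDiv P Q / s + 4 * s * M ^ 2 := by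
    intro ε hεabs
    set g : W → ℝ := fun z => s * (ε * (f z - μ)) with hgdef
    have hg0 : ∑ z, Q z * g z = 0 := by
      have h1 : ∀ z, Q z * g z = s * ε * (Q z * f z) - s * ε * μ * Q z := fun z => by
        simp only [hgdef]; ring
      rw [Finset.sum_congr rfl fun z _ => h1 z, Finset.sum_sub_distrib, ← Finset.mul_sum,
        ← Finset.mul_sum, hQ.2, ← hμdef]
      ring
    have hgc : ∀ z, |g z| ≤ 2 * s * M := by
      intro z
      have h1 : |f z - μ| ≤ 2 * M := by
        calc |f z - μ| ≤ |f z| + |μ| := abs_sub _ _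
          _ ≤ 2 * M := by linarith [hf z, hμ]
      calc |g z| = s * (|ε| * |f z - μ|) := by
            rw [hgdef]; rw [abs_mul, abs_mul, abs_of_pos hs]
        _ = s * |f z - μ| := by rw [hεabs, one_mul]
        _ ≤ s * (2 * M) := mul_le_mul_of_nonneg_left h1 hs.le
        _ = 2 * s * M := by ring
    have hmgf := mgf_le' Q hQ g hg0 (2 * s * M) hsM hgc
    have hlog : Real.log (∑ z, Q z * Real.exp (g z)) ≤ 4 * s ^ 2 * M ^ 2 := by
      have hpos : (0:ℝ) < 1 + (2 * s * M) ^ 2 := by positivity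
      have h2 : Real.log (∑ z, Q z * Real.exp (g z)) ≤ Real.log (1 + (2 * s * M) ^ 2) := by
        apply Real.log_le_log _ hmgf
        have : Nonempty W := by
          by_contra h
          rw [not_nonempty_iff] at h
          have := hQ.2
          rw [Finset.univ_eq_empty, Finset.sum_empty] at this
          norm_num at this
        exact Finset.sum_pos (fun z _ => mul_pos (hQpos z) (Real.exp_pos _))
          Finset.univ_nonempty
      have h3 : Real.log (1 + (2 * s * M) ^ 2) ≤ (2 * s * M) ^ 2 := by
        have := Real.log_le_sub_one_of_pos hpos
        linarith
      nlinarith [h2, h3]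
    have hdv := dv_ineq P Q hP hQ hQpos g
    have hlhs : ∑ z, P z * g z = s * (ε * (∑ z, P z * f z - μ)) := by
      have h1 : ∀ z, P z * g z = s * ε * (P z * f z) - s * ε * μ * P z := fun z => by
        simp only [hgdef]; ring
      rw [Finset.sum_congr rfl fun z _ => h1 z, Finset.sum_sub_distrib, ← Finset.mul_sum,
        ← Finset.mul_sum, hP.2]
      ring
    rw [hlhs] at hdv
    have h4 : s * (ε * (∑ z, P z * f z - μ)) ≤ klDiv P Q + 4 * s ^ 2 * M ^ 2 := by
      linarith [hdv, hlog]
    have := (div_le_div_iff_of_pos_right hs).2 h4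
    calc ε * (∑ z, P z * f z - μ) = s * (ε * (∑ z, P z * f z - μ)) / s := by
          field_simp
      _ ≤ (klDiv P Q + 4 * s ^ 2 * M ^ 2) / s := this
      _ = klDiv P Q / s + 4 * s * M ^ 2 := by field_simp
  rw [abs_le]
  constructor
  · have := side (-1) (by simp)
    linarith
  · have := side 1 (by simp)
    linarith
lemma Qmix_coeff_sum {K : ℕ} (ρ : Fin K → ℝ) (α : ℝ) :
    ∑ T : Finset (Fin K), (∏ k ∈ T, ρ k * α) * (∏ k ∈ Tᶜ, (1 - ρ k * α)) = 1 := by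
  classical
  have h := Finset.prod_add (fun k : Fin K => ρ k * α) (fun k => 1 - ρ k * α) Finset.univ
  rw [Finset.powerset_univ] at h
  simp only [← Finset.compl_eq_univ_sdiff] at h
  rw [← h]
  simp

section QmixBounds

variable {K : ℕ} {Z : Type*} [Fintype Z] (Q : Finset (Fin K) → Z → ℝ) (ρ : Fin K → ℝ) {α : ℝ}

lemma coeff_nonneg (hρ : ∀ k, ρ k ∈ Set.Icc (0:ℝ) 1) (hα0 : 0 ≤ α) (hα1 : α ≤ 1)
    (T : Finset (Fin K)) :
    0 ≤ (∏ k ∈ T, ρ k * α) * (∏ k ∈ Tᶜ, (1 - ρ k * α)) := by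
  apply mul_nonneg
  · exact Finset.prod_nonneg fun k _ => mul_nonneg (hρ k).1 hα0
  · refine Finset.prod_nonneg fun k _ => ?_
    have h1 : ρ k * α ≤ 1 := by
      calc ρ k * α ≤ 1 * 1 := mul_le_mul (hρ k).2 hα1 hα0 zero_le_one
        _ = 1 := one_mul 1
    linarith

lemma coeff_empty_ge (hρ : ∀ k, ρ k ∈ Set.Icc (0:ℝ) 1) (hρ1 : ∑ k, ρ k = 1)
    (hα0 : 0 ≤ α) (hα1 : α ≤ 1) :
    1 - α ≤ (∏ k ∈ (∅ : Finset (Fin K)), ρ k * α) * (∏ k ∈ (∅ : Finset (Fin K))ᶜ, (1 - ρ k * α)) := by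
  rw [Finset.prod_empty, one_mul, Finset.compl_empty]
  have h := one_sub_sum_le_prod_one_sub' Finset.univ (fun k => ρ k * α)
    (fun k _ => mul_nonneg (hρ k).1 hα0)
    (fun k _ => by
      calc ρ k * α ≤ 1 * 1 := mul_le_mul (hρ k).2 hα1 hα0 zero_le_one
        _ = 1 := one_mul 1)
  have hsum : ∑ k, ρ k * α = α := by rw [← Finset.sum_mul, hρ1, one_mul]
  rw [hsum] at h
  exact h

lemma coeff_empty_le (hρ : ∀ k, ρ k ∈ Set.Icc (0:ℝ) 1) (hα0 : 0 ≤ α) (hα1 : α ≤ 1) :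
    (∏ k ∈ (∅ : Finset (Fin K)), ρ k * α) * (∏ k ∈ (∅ : Finset (Fin K))ᶜ, (1 - ρ k * α)) ≤ 1 := by
  rw [Finset.prod_empty, one_mul, Finset.compl_empty]
  refine Finset.prod_le_one (fun k _ => ?_) (fun k _ => ?_)
  · have h1 : ρ k * α ≤ 1 := by
      calc ρ k * α ≤ 1 * 1 := mul_le_mul (hρ k).2 hα1 hα0 zero_le_one
        _ = 1 := one_mul 1
    linarith
  · have := mul_nonneg (hρ k).1 hα0
    linarith

lemma Qmix_lower (hQ : ∀ U, IsDist (Q U)) (hρ : ∀ k, ρ k ∈ Set.Icc (0:ℝ) 1)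
    (hρ1 : ∑ k, ρ k = 1) (hα0 : 0 ≤ α) (hα1 : α ≤ 1) (z : Z) :
    (1 - α) * Q ∅ z ≤ Qmix Q ρ α z := by
  classical
  have h1 : (∏ k ∈ (∅ : Finset (Fin K)), ρ k * α) * (∏ k ∈ (∅ : Finset (Fin K))ᶜ, (1 - ρ k * α))
      * Q ∅ z ≤ Qmix Q ρ α z := by
    refine Finset.single_le_sum (f := fun T : Finset (Fin K) =>
      (∏ k ∈ T, ρ k * α) * (∏ k ∈ Tᶜ, (1 - ρ k * α)) * Q T z) ?_ (Finset.mem_univ ∅)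
    intro T _
    exact mul_nonneg (coeff_nonneg ρ hρ hα0 hα1 T) ((hQ T).1 z)
  refine le_trans ?_ h1
  exact mul_le_mul_of_nonneg_right (coeff_empty_ge ρ hρ hρ1 hα0 hα1) ((hQ ∅).1 z)

lemma Qmix_upper (hQ : ∀ U, IsDist (Q U)) (hρ : ∀ k, ρ k ∈ Set.Icc (0:ℝ) 1)
    (hρ1 : ∑ k, ρ k = 1) (hα0 : 0 ≤ α) (hα1 : α ≤ 1) (B : ℝ)
    (hB : ∀ T z, Q T z ≤ B * Q ∅ z) (hQ0 : ∀ z, 0 ≤ Q ∅ z) (hB0 : 0 ≤ B) (z : Z) :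
    Qmix Q ρ α z ≤ (1 + B * α) * Q ∅ z := by
  classical
  set c : Finset (Fin K) → ℝ := fun T => (∏ k ∈ T, ρ k * α) * (∏ k ∈ Tᶜ, (1 - ρ k * α))
    with hcdef
  have hsplit : Qmix Q ρ α z = c ∅ * Q ∅ z +
      ∑ T ∈ Finset.univ.erase ∅, c T * Q T z := by
    rw [Qmix]
    rw [← Finset.add_sum_erase Finset.univ (fun T => c T * Q T z) (Finset.mem_univ ∅)]
  have hcsum : ∑ T ∈ Finset.univ.erase ∅, c T = 1 - c ∅ := by
    have h := Qmix_coeff_sum ρ α (K := K)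
    have h2 : c ∅ + ∑ T ∈ Finset.univ.erase ∅, c T = 1 := by
      rw [Finset.add_sum_erase Finset.univ c (Finset.mem_univ ∅)]
      exact h
    linarith
  have hc0 : 1 - α ≤ c ∅ := coeff_empty_ge ρ hρ hρ1 hα0 hα1
  have hc1 : c ∅ ≤ 1 := coeff_empty_le ρ hρ hα0 hα1
  have htail : ∑ T ∈ Finset.univ.erase ∅, c T * Q T z ≤ α * (B * Q ∅ z) := by
    calc ∑ T ∈ Finset.univ.erase ∅, c T * Q T z
        ≤ ∑ T ∈ Finset.univ.erase ∅, c T * (B * Q ∅ z) := by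
          refine Finset.sum_le_sum fun T _ => ?_
          exact mul_le_mul_of_nonneg_left (hB T z) (coeff_nonneg ρ hρ hα0 hα1 T)
      _ = (1 - c ∅) * (B * Q ∅ z) := by rw [← Finset.sum_mul, hcsum]
      _ ≤ α * (B * Q ∅ z) := by
          refine mul_le_mul_of_nonneg_right (by linarith) ?_
          exact mul_nonneg hB0 (hQ0 z)
  calc Qmix Q ρ α z = c ∅ * Q ∅ z + ∑ T ∈ Finset.univ.erase ∅, c T * Q T z := hsplit
    _ ≤ 1 * Q ∅ z + α * (B * Q ∅ z) := by
        refine add_le_add (mul_le_mul_of_nonneg_right hc1 (hQ0 z)) htail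
    _ = (1 + B * α) * Q ∅ z := by ring

lemma Qmix_sum_one (hQ : ∀ U, IsDist (Q U)) :
    ∑ z, Qmix Q ρ α z = 1 := by
  classical
  rw [show ∑ z, Qmix Q ρ α z = ∑ z, ∑ T : Finset (Fin K),
      (∏ k ∈ T, ρ k * α) * (∏ k ∈ Tᶜ, (1 - ρ k * α)) * Q T z from rfl]
  rw [Finset.sum_comm]
  have : ∀ T : Finset (Fin K), ∑ z, (∏ k ∈ T, ρ k * α) * (∏ k ∈ Tᶜ, (1 - ρ k * α)) * Q T z
      = (∏ k ∈ T, ρ k * α) * (∏ k ∈ Tᶜ, (1 - ρ k * α)) := by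
    intro T
    rw [← Finset.mul_sum, (hQ T).2, mul_one]
  rw [Finset.sum_congr rfl fun T _ => this T]
  exact Qmix_coeff_sum ρ α

end QmixBounds

/-- single-letter log-ratio bound -/
lemma abs_log_ratio_le {m q α B : ℝ} (hB : 1 ≤ B) (hlow : (1 - α) * q ≤ m)
    (hup : m ≤ (1 + B * α) * q) (hq : 0 < q) (hα : 0 < α) (hα2 : α ≤ 1/2) :
    |Real.log (m / q)| ≤ 2 * B * α := by
  have hm : 0 < m := lt_of_lt_of_le (by nlinarith) hlow
  have hr : 0 < m / q := div_pos hm hq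
  rw [abs_le]
  constructor
  · have h1 : (1 - α) ≤ m / q := (le_div_iff₀ hq).2 (by linarith)
    have h1a : (0:ℝ) < 1 - α := by linarith
    have h2 : Real.log (1 - α) ≤ Real.log (m / q) := Real.log_le_log h1a h1
    have h3 : Real.log (1 - α) = -Real.log ((1 - α)⁻¹) := by rw [Real.log_inv]; ring
    have h4 : Real.log ((1 - α)⁻¹) ≤ (1 - α)⁻¹ - 1 :=
      Real.log_le_sub_one_of_pos (inv_pos.2 h1a)
    have h5 : (1 - α)⁻¹ ≤ 1 + 2 * α := by
      rw [inv_le_iff_one_le_mul₀ h1a]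
      nlinarith
    have h6 : -(2 * α) ≤ Real.log (1 - α) := by rw [h3]; linarith
    have h7 : (2:ℝ) * α ≤ 2 * B * α := by nlinarith
    linarith
  · have h1 : m / q ≤ 1 + B * α := (div_le_iff₀ hq).2 (by linarith)
    have h2 := Real.log_le_sub_one_of_pos hr
    nlinarith
lemma tendsto_poly_exp (c : ℝ) (hc : 0 < c) (k : ℕ) :
    Tendsto (fun x : ℝ => x ^ k * Real.exp (-(c * x))) atTop (𝓝 0) := by
  have h := (Real.tendsto_pow_mul_exp_neg_atTop_nhds_zero k).comp
    (Filter.Tendsto.const_mul_atTop hc tendsto_id)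
  have h2 := h.const_mul ((c ^ k)⁻¹)
  rw [mul_zero] at h2
  refine h2.congr fun x => ?_
  simp only [Function.comp_apply, id_eq]
  rw [mul_pow]
  have hck : (c : ℝ) ^ k ≠ 0 := by positivity
  field_simp

/-- if a sequence of distributions `Pₙ` on `Zⁿ` satisfies
`D(Pₙ‖Q_{αₙ}^{⊗n}) ≤ exp(−ξ₂ n αₙ)`, then the divergences of `Pₙ` and of `Q_{αₙ}^{⊗n}`
from `Q_∅^{⊗n}` are exponentially close. -/
theorem klDiv_identification (K : ℕ) (hK : 2 ≤ K) {Z : Type*} [Fintype Z]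
    (Q : Finset (Fin K) → Z → ℝ) (hQ : ∀ U, IsDist (Q U))
    (hQpos : ∀ z, 0 < Q ∅ z)
    (hAC : ∀ U : Finset (Fin K), U.Nonempty → AbsCont (Q U) (Q ∅))
    (ρ : Fin K → ℝ) (hρ : ∀ k, ρ k ∈ Set.Icc (0 : ℝ) 1) (hρ1 : ∑ k, ρ k = 1)
    (α : ℕ → ℝ) (hα : ∀ n, α n ∈ Set.Ioo (0 : ℝ) 1)
    (hα0 : Tendsto α atTop (𝓝 0))
    (hnα : Tendsto (fun n : ℕ => (n : ℝ) * α n) atTop atTop)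
    (ξ₂ : ℝ) (hξ₂ : 0 < ξ₂)
    (P : ∀ n : ℕ, (Fin n → Z) → ℝ) (hP : ∀ n, IsDist (P n))
    (hPD : ∀ n : ℕ, klDiv (P n) (fun z : Fin n → Z => ∏ j, Qmix Q ρ (α n) (z j)) ≤
      Real.exp (-(ξ₂ * n * α n))) :
    ∃ ξ₃ > 0, ∃ N : ℕ, ∀ n ≥ N,
      |klDiv (P n) (fun z : Fin n → Z => ∏ j, Q ∅ (z j)) -
          klDiv (fun z : Fin n → Z => ∏ j, Qmix Q ρ (α n) (z j))
            (fun z : Fin n → Z => ∏ j, Q ∅ (z j))| ≤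
        Real.exp (-(ξ₃ * n * α n)) := by
  classical
  -- the constant B with Q T z ≤ B * Q ∅ z
  set B : ℝ := 1 + ∑ T : Finset (Fin K), ∑ z, Q T z / Q ∅ z with hBdef
  have hBsum : 0 ≤ ∑ T : Finset (Fin K), ∑ z, Q T z / Q ∅ z :=
    Finset.sum_nonneg fun T _ => Finset.sum_nonneg fun z _ =>
      div_nonneg ((hQ T).1 z) (hQpos z).le
  have hB1 : 1 ≤ B := by rw [hBdef]; linarith
  have hB0 : 0 ≤ B := by linarith
  have hB : ∀ T z, Q T z ≤ B * Q ∅ z := by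
    intro T z
    have h2 : Q T z / Q ∅ z ≤ ∑ z', Q T z' / Q ∅ z' :=
      Finset.single_le_sum (fun z' _ => div_nonneg ((hQ T).1 z') (hQpos z').le)
        (Finset.mem_univ z)
    have h3 : ∑ z', Q T z' / Q ∅ z' ≤ ∑ T' : Finset (Fin K), ∑ z', Q T' z' / Q ∅ z' :=
      Finset.single_le_sum (fun T' _ => Finset.sum_nonneg fun z' _ =>
        div_nonneg ((hQ T').1 z') (hQpos z').le) (Finset.mem_univ T)
    have h1 : Q T z / Q ∅ z ≤ B := by rw [hBdef]; linarith
    calc Q T z = Q T z / Q ∅ z * Q ∅ z := (div_mul_cancel₀ _ (ne_of_gt (hQpos z))).symm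
      _ ≤ B * Q ∅ z := mul_le_mul_of_nonneg_right h1 (hQpos z).le
  refine ⟨ξ₂ / 4, by positivity, ?_⟩
  -- eventual conditions on x = n * α n and on α n
  have hT1 : Tendsto (fun x : ℝ => 4 * B * (x * Real.exp (-(ξ₂ / 2 * x)))) atTop (𝓝 0) := by
    have h := (tendsto_poly_exp (ξ₂ / 2) (by positivity) 1).const_mul (4 * B)
    rw [mul_zero] at h
    refine h.congr fun x => by rw [pow_one]
  have hT2 : Tendsto (fun x : ℝ => Real.exp (-(3 * ξ₂ / 4 * x)) + Real.exp (-(ξ₂ / 4 * x)) +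
      16 * B ^ 2 * (x ^ 2 * Real.exp (-(ξ₂ / 4 * x)))) atTop (𝓝 0) := by
    have e1 := (tendsto_poly_exp (3 * ξ₂ / 4) (by positivity) 0).congr
      (fun x => by rw [pow_zero, one_mul])
    have e2 := (tendsto_poly_exp (ξ₂ / 4) (by positivity) 0).congr
      (fun x => by rw [pow_zero, one_mul])
    have e3 := (tendsto_poly_exp (ξ₂ / 4) (by positivity) 2).const_mul (16 * B ^ 2)
    rw [mul_zero] at e3
    have := (e1.add e2).add e3
    simpa using this
  have EvC1 : ∀ᶠ x : ℝ in atTop, 4 * B * (x * Real.exp (-(ξ₂ / 2 * x))) ≤ 1 :=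
    hT1.eventually_le_const zero_lt_one
  have EvC2 : ∀ᶠ x : ℝ in atTop, Real.exp (-(3 * ξ₂ / 4 * x)) + Real.exp (-(ξ₂ / 4 * x)) +
      16 * B ^ 2 * (x ^ 2 * Real.exp (-(ξ₂ / 4 * x))) ≤ 1 :=
    hT2.eventually_le_const zero_lt_one
  have EvA : ∀ᶠ n : ℕ in atTop, α n ≤ 1 / 2 :=
    hα0.eventually_le_const (by norm_num : (0:ℝ) < 1 / 2)
  have Ev := (hnα.eventually (EvC1.and EvC2)).and EvA
  obtain ⟨N, hN⟩ := eventually_atTop.1 Ev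
  refine ⟨N, fun n hn => ?_⟩
  obtain ⟨⟨hc1n, hc2n⟩, hαhalf⟩ := hN n hn
  -- notation for this n
  have hαn := hα n
  have hα0n : 0 < α n := hαn.1
  have hα1n : α n < 1 := hαn.2
  set x : ℝ := (n : ℝ) * α n with hxdef
  have hx0 : 0 ≤ x := mul_nonneg (Nat.cast_nonneg n) hα0n.le
  set qa : Z → ℝ := Qmix Q ρ (α n) with hqadef
  have qaLow : ∀ z, (1 - α n) * Q ∅ z ≤ qa z :=
    fun z => Qmix_lower Q ρ hQ hρ hρ1 hα0n.le hα1n.le z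
  have qaUp : ∀ z, qa z ≤ (1 + B * α n) * Q ∅ z :=
    fun z => Qmix_upper Q ρ hQ hρ hρ1 hα0n.le hα1n.le B hB (fun z => (hQpos z).le) hB0 z
  have qaPos : ∀ z, 0 < qa z := by
    intro z
    have h1 : 0 < (1 - α n) * Q ∅ z := mul_pos (by linarith) (hQpos z)
    linarith [qaLow z]
  have ℓbound : ∀ z, |Real.log (qa z / Q ∅ z)| ≤ 2 * B * α n := fun z =>
    abs_log_ratio_le hB1 (qaLow z) (qaUp z) (hQpos z) hα0n hαhalf
  -- product measures
  set QA : (Fin n → Z) → ℝ := fun z => ∏ j, Qmix Q ρ (α n) (z j) with hQAdef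
  set R : (Fin n → Z) → ℝ := fun z => ∏ j, Q ∅ (z j) with hRdef
  have QApos : ∀ z, 0 < QA z := fun z => Finset.prod_pos fun j _ => qaPos (z j)
  have Rpos : ∀ z, 0 < R z := fun z => Finset.prod_pos fun j _ => hQpos (z j)
  have QAdist : IsDist QA := by
    refine ⟨fun z => (QApos z).le, ?_⟩
    have h := Finset.prod_univ_sum (fun _ : Fin n => (Finset.univ : Finset Z))
      (fun _ y => qa y)
    rw [Fintype.piFinset_univ] at h
    have h1 : ∑ y, qa y = 1 := Qmix_sum_one Q ρ hQ
    calc ∑ z : Fin n → Z, QA z = ∏ _j : Fin n, ∑ y, qa y := h.symm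
      _ = 1 := by rw [h1]; exact Finset.prod_const_one
  -- the log-likelihood ratio L
  set L : (Fin n → Z) → ℝ := fun z => Real.log (QA z / R z) with hLdef
  have hLsum : ∀ z, L z = ∑ j, Real.log (qa (z j) / Q ∅ (z j)) := by
    intro z
    simp only [hLdef]
    have h1 : QA z / R z = ∏ j, qa (z j) / Q ∅ (z j) := by
      simp only [hQAdef, hRdef, hqadef, ← Finset.prod_div_distrib]
    rw [h1]
    exact Real.log_prod fun j _ => ne_of_gt (div_pos (qaPos (z j)) (hQpos (z j)))
  have hL : ∀ z, |L z| ≤ 2 * B * x := by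
    intro z
    rw [hLsum z]
    calc |∑ j, Real.log (qa (z j) / Q ∅ (z j))|
        ≤ ∑ j, |Real.log (qa (z j) / Q ∅ (z j))| := Finset.abs_sum_le_sum_abs _ _
      _ ≤ ∑ _j : Fin n, 2 * B * α n := Finset.sum_le_sum fun j _ => ℓbound (z j)
      _ = (n : ℝ) * (2 * B * α n) := by
          rw [Finset.sum_const, Finset.card_univ, Fintype.card_fin, nsmul_eq_mul]
      _ = 2 * B * x := by rw [hxdef]; ring
  -- split identity
  have split : klDiv (P n) R = klDiv (P n) QA + ∑ z, P n z * L z := by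
    have term : ∀ z, P n z * Real.log (P n z / R z) =
        P n z * Real.log (P n z / QA z) + P n z * L z := by
      intro z
      rcases eq_or_lt_of_le ((hP n).1 z) with h | h
      · simp [← h]
      · simp only [hLdef]
        rw [Real.log_div (ne_of_gt h) (ne_of_gt (Rpos z)),
          Real.log_div (ne_of_gt h) (ne_of_gt (QApos z)),
          Real.log_div (ne_of_gt (QApos z)) (ne_of_gt (Rpos z))]
        ring
    rw [klDiv, Finset.sum_congr rfl fun z _ => term z, Finset.sum_add_distrib]
    rfl
  have hQAR : klDiv QA R = ∑ z, QA z * L z := rfl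
  -- bounds
  set D : ℝ := klDiv (P n) QA with hDdef
  have hD0 : 0 ≤ D := klDiv_nonneg' (P n) QA (hP n) QAdist QApos
  have hDle : D ≤ Real.exp (-(ξ₂ * x)) := by
    have := hPD n
    rw [← hQAdef] at this
    rw [hDdef]
    calc D ≤ Real.exp (-(ξ₂ * ↑n * α n)) := this
      _ = Real.exp (-(ξ₂ * x)) := by rw [hxdef]; ring_nf
  set s : ℝ := Real.exp (-(ξ₂ / 2 * x)) with hsdef
  have hs : 0 < s := Real.exp_pos _
  set M : ℝ := 2 * B * x with hMdef
  have hM : 0 ≤ M := by positivity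
  have hsM : 2 * s * M ≤ 1 := by
    calc 2 * s * M = 4 * B * (x * Real.exp (-(ξ₂ / 2 * x))) := by
          rw [hMdef, hsdef]; ring
      _ ≤ 1 := hc1n
  have hmean := mean_diff_le' (P n) QA (hP n) QAdist QApos L M s hM hs hsM hL
  -- rewrite goal
  have goal_eq : klDiv (P n) R - klDiv QA R = D + (∑ z, P n z * L z - ∑ z, QA z * L z) := by
    rw [split, hQAR, hDdef]; ring
  have habs : |klDiv (P n) R - klDiv QA R| ≤ D + (D / s + 4 * s * M ^ 2) := by
    rw [goal_eq]
    calc |D + (∑ z, P n z * L z - ∑ z, QA z * L z)|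
        ≤ |D| + |∑ z, P n z * L z - ∑ z, QA z * L z| := abs_add_le _ _
      _ ≤ D + (D / s + 4 * s * M ^ 2) := by
          rw [abs_of_nonneg hD0]
          linarith [hmean]
  have hDs : D / s ≤ Real.exp (-(ξ₂ / 2 * x)) := by
    rw [div_le_iff₀ hs]
    calc D ≤ Real.exp (-(ξ₂ * x)) := hDle
      _ = Real.exp (-(ξ₂ / 2 * x)) * s := by
          rw [hsdef, ← Real.exp_add]; congr 1; ring
  have hMs : 4 * s * M ^ 2 = 16 * B ^ 2 * (x ^ 2 * Real.exp (-(ξ₂ / 2 * x))) := by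
    rw [hMdef, hsdef]; ring
  have key : Real.exp (-(ξ₂ * x)) + Real.exp (-(ξ₂ / 2 * x)) +
      16 * B ^ 2 * (x ^ 2 * Real.exp (-(ξ₂ / 2 * x))) ≤ Real.exp (-(ξ₂ / 4 * x)) := by
    have e1 : Real.exp (-(ξ₂ * x)) =
        Real.exp (-(ξ₂ / 4 * x)) * Real.exp (-(3 * ξ₂ / 4 * x)) := by
      rw [← Real.exp_add]; congr 1; ring
    have e2 : Real.exp (-(ξ₂ / 2 * x)) =
        Real.exp (-(ξ₂ / 4 * x)) * Real.exp (-(ξ₂ / 4 * x)) := by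
      rw [← Real.exp_add]; congr 1; ring
    calc Real.exp (-(ξ₂ * x)) + Real.exp (-(ξ₂ / 2 * x)) +
          16 * B ^ 2 * (x ^ 2 * Real.exp (-(ξ₂ / 2 * x)))
        = Real.exp (-(ξ₂ / 4 * x)) * (Real.exp (-(3 * ξ₂ / 4 * x)) +
            Real.exp (-(ξ₂ / 4 * x)) + 16 * B ^ 2 * (x ^ 2 * Real.exp (-(ξ₂ / 4 * x)))) := by
          rw [e1, e2]; ring
      _ ≤ Real.exp (-(ξ₂ / 4 * x)) * 1 :=
          mul_le_mul_of_nonneg_left hc2n (Real.exp_pos _).le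
      _ = Real.exp (-(ξ₂ / 4 * x)) := mul_one _
  have final : |klDiv (P n) R - klDiv QA R| ≤ Real.exp (-(ξ₂ / 4 * x)) := by
    calc |klDiv (P n) R - klDiv QA R| ≤ D + (D / s + 4 * s * M ^ 2) := habs
      _ ≤ Real.exp (-(ξ₂ * x)) + Real.exp (-(ξ₂ / 2 * x)) +
          16 * B ^ 2 * (x ^ 2 * Real.exp (-(ξ₂ / 2 * x))) := by
          rw [hMs]; linarith [hDle, hDs]
      _ ≤ Real.exp (-(ξ₂ / 4 * x)) := key
  have hexp : Real.exp (-(ξ₂ / 4 * x)) = Real.exp (-(ξ₂ / 4 * ↑n * α n)) := by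
    rw [hxdef]; ring_nf
  rw [hexp] at final
  exact final
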